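/- Let V be a 2m-dimensional vector space and x a nilpotent endomorphism with x² = 0. Suppose (V_0,…,V_{2m}) is an x-stable complete flag such that for each i ∈ {0,…,k} the map induced by x on V_{m+i}/V_{m-i} has Jordan type (2^i) (i.e., is a direct sum of i Jordan blocks of size 2, where k = rank x). Then im x ⊆ V_m ⊆ ker x. -/
import Mathlib

open Module

/-- Rank-nullity for a linear map restricted to a submodule. -/
lemma stmt11_rn {K V : Type*} [Field K] [AddCommGroup V] [Module K V] [FiniteDimensional K V]
    (x : V →ₗ[K] V) (W : Submodule K V) :
    finrank K ↥(W.map x) + finrank K ↥(W ⊓ LinearMap.ker x) = finrank K ↥W := by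
  have h := LinearMap.finrank_range_add_finrank_ker (x.domRestrict W)
  rw [LinearMap.range_domRestrict] at h
  rw [← h]
  congr 1
  rw [LinearMap.ker_domRestrict]
  have h2 : Submodule.comap W.subtype (LinearMap.ker x)
      = Submodule.comap W.subtype (W ⊓ LinearMap.ker x) := by
    rw [Submodule.comap_inf]
    simp
  rw [h2]
  exact (Submodule.comapSubtypeEquivOfLe (inf_le_left : W ⊓ LinearMap.ker x ≤ W)).finrank_eq.symm

theorem stmt11 {K V : Type*} [Field K] [AddCommGroup V] [Module K V] [FiniteDimensional K V]
    (m k : ℕ) (hdimV : finrank K V = 2 * m)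
    (x : V →ₗ[K] V) (hx2 : x ^ 2 = 0) (hrank : finrank K ↥(LinearMap.range x) = k)
    (F : ℕ → Submodule K V) (hmono : Monotone F)
    (hdim : ∀ i ≤ 2 * m, finrank K ↥(F i) = i)
    (hstab : ∀ i, Submodule.map x (F i) ≤ F i)
    (hjordan : ∀ i ≤ k,
      F (m - i) ⊔ Submodule.map x (F (m + i)) = F (m + i) ⊓ Submodule.comap x (F (m - i))) :
    LinearMap.range x ≤ F m ∧ F m ≤ LinearMap.ker x := by
  classical
  have hxx : ∀ v : V, x (x v) = 0 := by
    intro v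
    have h := LinearMap.congr_fun hx2 v
    simpa [pow_two, Module.End.mul_apply] using h
  -- range x ≤ ker x
  have hrk : LinearMap.range x ≤ LinearMap.ker x := by
    rintro v ⟨u, rfl⟩
    exact hxx u
  -- trivial case k = 0
  rcases Nat.eq_zero_or_pos k with hk0 | hk1
  · have hr : LinearMap.range x = ⊥ := Submodule.finrank_eq_zero.mp (by rw [hrank, hk0])
    constructor
    · rw [hr]; exact bot_le
    · intro v _
      have hv : x v ∈ LinearMap.range x := ⟨v, rfl⟩
      rw [hr] at hv
      exact hv
  -- k ≤ m
  have hkm : k ≤ m := by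
    have h1 := LinearMap.finrank_range_add_finrank_ker x
    have h2 : finrank K ↥(LinearMap.range x) ≤ finrank K ↥(LinearMap.ker x) :=
      Submodule.finrank_mono hrk
    rw [hrank, hdimV] at h1
    omega
  -- F p = ⊤ for 2m ≤ p
  have htop : ∀ p, 2 * m ≤ p → F p = ⊤ := by
    intro p hp
    have h1 : F (2 * m) = ⊤ :=
      Submodule.eq_top_of_finrank_eq (by rw [hdim (2 * m) le_rfl, hdimV])
    exact eq_top_iff.mpr (h1 ▸ hmono hp)
  -- Step A : x (F (p+1)) ≤ F p
  have hA : ∀ p, Submodule.map x (F (p + 1)) ≤ F p := by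
    intro p
    by_cases hp : p + 1 ≤ 2 * m
    · rintro _ ⟨v, hv, rfl⟩
      by_contra hxv
      have hxvF : x v ∈ F (p + 1) := hstab (p + 1) ⟨v, hv, rfl⟩
      have hsub : F p ⊔ Submodule.span K {x v} ≤ F (p + 1) :=
        sup_le (hmono (Nat.le_succ p)) ((Submodule.span_singleton_le_iff_mem _ _).mpr hxvF)
      have hlt : F p < F p ⊔ Submodule.span K {x v} := by
        refine lt_of_le_of_ne le_sup_left (fun h => hxv ?_)
        rw [h]
        exact Submodule.mem_sup_right (Submodule.mem_span_singleton_self (x v))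
      have hfr1 : p < finrank K ↥(F p ⊔ Submodule.span K {x v}) := by
        have := Submodule.finrank_lt_finrank_of_lt hlt
        rwa [hdim p (by omega)] at this
      have hfr2 : finrank K ↥(F p ⊔ Submodule.span K {x v}) ≤ p + 1 := by
        have := Submodule.finrank_mono hsub
        rwa [hdim (p + 1) hp] at this
      have heq : F p ⊔ Submodule.span K {x v} = F (p + 1) :=
        Submodule.eq_of_le_of_finrank_le hsub (by rw [hdim (p + 1) hp]; omega)
      rw [← heq] at hv
      obtain ⟨a, ha, b, hb, hab⟩ := Submodule.mem_sup.mp hv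
      obtain ⟨c, rfl⟩ := Submodule.mem_span_singleton.mp hb
      apply hxv
      have : x v = x a := by
        rw [← hab, map_add, map_smul, hxx v, smul_zero, add_zero]
      rw [this]
      exact hstab p ⟨a, ha, rfl⟩
    · have : F p = ⊤ := htop p (by omega)
      rw [this]
      exact le_top
  -- Step C : analysis of hjordan at i = k
  set A := F (m - k) with hAdef
  set B := F (m + k) with hBdef
  set X := Submodule.map x B with hXdef
  have hfrA : finrank K ↥A = m - k := hdim (m - k) (by omega)
  have hfrB : finrank K ↥B = m + k := hdim (m + k) (by omega)
  have hj := hjordan k le_rfl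
  set W := B ⊓ Submodule.comap x A with hWdef
  have hmapW : Submodule.map x W = X ⊓ A := by
    apply le_antisymm
    · rintro _ ⟨w, ⟨hwB, hwA⟩, rfl⟩
      exact ⟨⟨w, hwB, rfl⟩, hwA⟩
    · rintro y ⟨⟨w, hwB, rfl⟩, hyA⟩
      exact ⟨w, ⟨hwB, hyA⟩, rfl⟩
  have hkerW : W ⊓ LinearMap.ker x = B ⊓ LinearMap.ker x := by
    apply le_antisymm
    · exact inf_le_inf_right _ inf_le_left
    · rintro v ⟨hvB, hvk⟩
      have hvk' : x v = 0 := hvk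
      exact ⟨⟨hvB, by simp [Submodule.mem_comap, hvk']⟩, hvk⟩
  have e1 := Submodule.finrank_sup_add_finrank_inf_eq A X
  have e2 := stmt11_rn x W
  have e3 := stmt11_rn x B
  rw [hmapW, hkerW] at e2
  rw [show Submodule.map x B = X from rfl] at e3
  have hXle : finrank K ↥X ≤ k := by
    rw [← hrank]
    exact Submodule.finrank_mono LinearMap.map_le_range
  have hjfr : finrank K ↥(A ⊔ X) = finrank K ↥W := by rw [hj]
  have hinfcomm : finrank K ↥(X ⊓ A) = finrank K ↥(A ⊓ X) := by rw [inf_comm]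
  have hd0fr : finrank K ↥(A ⊓ X) = 0 ∧ finrank K ↥X = k := by
    rw [hfrA] at e1
    rw [hfrB] at e3
    rw [hinfcomm] at e2
    omega
  have hd0 : A ⊓ X = ⊥ := Submodule.finrank_eq_zero.mp hd0fr.1
  have hXrange : X = LinearMap.range x :=
    Submodule.eq_of_le_of_finrank_le LinearMap.map_le_range (by rw [hrank, hd0fr.2])
  -- Step D : F m ≤ ker x
  have hFmker : F m ≤ LinearMap.ker x := by
    intro v hv
    rw [LinearMap.mem_ker]
    by_contra hxv
    have hxvX : x v ∈ X := ⟨v, hmono (by omega) hv, rfl⟩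
    have hxvFm1 : x v ∈ F (m - 1) := by
      apply hA (m - 1)
      have : m - 1 + 1 = m := by omega
      rw [this]
      exact ⟨v, hv, rfl⟩
    have hex : ∃ p, x v ∈ F p := ⟨m - 1, hxvFm1⟩
    set p₀ := Nat.find hex with hp₀def
    have hp₀ : x v ∈ F p₀ := Nat.find_spec hex
    have hp₀le : p₀ ≤ m - 1 := Nat.find_min' hex hxvFm1
    have hp₀pos : 1 ≤ p₀ := by
      by_contra h
      have h0 : p₀ = 0 := by omega
      have hF0 : F 0 = ⊥ := Submodule.finrank_eq_zero.mp (hdim 0 (by omega))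
      rw [h0, hF0] at hp₀
      exact hxv hp₀
    have hp₀k : m - k < p₀ := by
      by_contra h
      have : x v ∈ A := hmono (by omega) hp₀
      have : x v ∈ A ⊓ X := ⟨this, hxvX⟩
      rw [hd0] at this
      exact hxv this
    set j := m - p₀ with hjdef
    have hjk : j ≤ k := by omega
    have hmj : m - j = p₀ := by omega
    have hj2 := hjordan j hjk
    have hvS : v ∈ F (m + j) ⊓ Submodule.comap x (F (m - j)) := by
      refine Submodule.mem_inf.mpr ⟨hmono (by omega) hv, Submodule.mem_comap.mpr ?_⟩
      rw [hmj]
      exact hp₀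
    rw [← hj2] at hvS
    obtain ⟨a, ha, w, hw, hsum⟩ := Submodule.mem_sup.mp hvS
    obtain ⟨b, _, rfl⟩ := hw
    have hxva : x v = x a := by
      rw [← hsum, map_add, hxx b, add_zero]
    have hmem : x v ∈ F (p₀ - 1) := by
      apply hA (p₀ - 1)
      have hpp : p₀ - 1 + 1 = p₀ := by omega
      rw [hpp]
      rw [hmj] at ha
      exact ⟨a, ha, hxva.symm⟩
    exact Nat.find_min hex (show p₀ - 1 < p₀ by omega) hmem
  -- Step E : range x ≤ F m
  refine ⟨?_, hFmker⟩
  have hBker : B ⊓ LinearMap.ker x = F m := by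
    have hle : F m ≤ B ⊓ LinearMap.ker x := le_inf (hmono (by omega)) hFmker
    refine (Submodule.eq_of_le_of_finrank_le hle ?_).symm
    rw [hdim m (by omega)]
    omega
  rw [← hXrange]
  rw [← hBker]
  exact le_inf (hstab (m + k)) (hXrange ▸ hrk)
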